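/- M_n^k equals a constant multiple of the CK extension of \underline x^n P_k(\underline x): M_n^k(x) = (n!/∏_{s=0}^{n}β_k(s)) · CK[\underline x^n P_k(\underline x)](x) for all n ≥ 0. -/

import Mathlib

open Finset

variable {m : ℕ} {A : Type*} [NormedRing A] [NormedAlgebra ℝ A]

/-- The Dirac operator ∂_{\underline x} = Σ_j e_j ∂_{x_j} on A-valued functions on ℝ^m,
where `e : Fin m → A` are the Clifford generators acting by left multiplication. -/
noncomputable def Dirac (e : Fin m → A) (f : EuclideanSpace ℝ (Fin m) → A)
    (x : EuclideanSpace ℝ (Fin m)) : A :=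
  ∑ j, e j * fderiv ℝ f x (EuclideanSpace.single j 1)

/-- The generalized Cauchy–Riemann operator ∂_x = ∂_{x_0} + Σ_j e_j ∂_{x_j}
on A-valued functions on ℝ^{m+1} = ℝ × ℝ^m. -/
noncomputable def CR (e : Fin m → A) (f : ℝ × EuclideanSpace ℝ (Fin m) → A)
    (p : ℝ × EuclideanSpace ℝ (Fin m)) : A :=
  fderiv ℝ f p (1, 0) + ∑ j, e j * fderiv ℝ f p (0, EuclideanSpace.single j 1)

/-- The conjugate Cauchy–Riemann operator \overline∂_x = ∂_{x_0} − Σ_j e_j ∂_{x_j}. -/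
noncomputable def CRbar (e : Fin m → A) (f : ℝ × EuclideanSpace ℝ (Fin m) → A)
    (p : ℝ × EuclideanSpace ℝ (Fin m)) : A :=
  fderiv ℝ f p (1, 0) - ∑ j, e j * fderiv ℝ f p (0, EuclideanSpace.single j 1)

/-- The Laplacian Δ = Σ_{j=0}^m ∂_{x_j}² on ℝ^{m+1} = ℝ × ℝ^m. -/
noncomputable def Lap (f : ℝ × EuclideanSpace ℝ (Fin m) → A)
    (p : ℝ × EuclideanSpace ℝ (Fin m)) : A :=
  fderiv ℝ (fun q => fderiv ℝ f q (1, 0)) p (1, 0) +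
    ∑ j, fderiv ℝ (fun q => fderiv ℝ f q (0, EuclideanSpace.single j 1)) p
      (0, EuclideanSpace.single j 1)

/-- The Clifford vector \underline x = Σ_j x_j e_j associated to x ∈ ℝ^m. -/
noncomputable def vec (e : Fin m → A) (x : EuclideanSpace ℝ (Fin m)) : A :=
  ∑ j, x j • e j

/-- g : ℝ^m → A is a polynomial map of degree at most d. -/
def IsPolyDeg (d : ℕ) (g : EuclideanSpace ℝ (Fin m) → A) : Prop :=
  ∃ (S : Finset (Fin m →₀ ℕ)) (c : (Fin m →₀ ℕ) → A),
    (∀ α ∈ S, (α.sum fun _ n => n) ≤ d) ∧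
    ∀ x, g x = ∑ α ∈ S, (∏ j, x j ^ α j) • c α

/-- The Cauchy–Kovalevskaya extension CK[g](x_0,\underline x)
= Σ_{j≥0} ((−x_0)^j/j!) ∂_{\underline x}^j g(\underline x). -/
noncomputable def CK (e : Fin m → A) (g : EuclideanSpace ℝ (Fin m) → A)
    (p : ℝ × EuclideanSpace ℝ (Fin m)) : A :=
  ∑' j : ℕ, (((-p.1) ^ j / j.factorial : ℝ)) • (Dirac e)^[j] g p.2

/-- β_k(0)=1, β_k(s)=s for even s ≥ 1, β_k(s)=2k+m+s−1 for odd s. -/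
noncomputable def betak (m k : ℕ) (n : ℕ) : ℝ :=
  if n = 0 then 1 else if Even n then (n : ℝ) else (2 * k + m + n - 1 : ℝ)

/-- C_{k,n}(j) = (n−j)! / ∏_{s=0}^{n−j} β_k(s). -/
noncomputable def Ckn (m k n j : ℕ) : ℝ :=
  ((n - j).factorial : ℝ) / ∏ s ∈ Finset.range (n - j + 1), betak m k s

/-- M_n^k(x) = (Σ_{j=0}^{n} C(n,j) C_{k,n}(j) x_0^j \underline x^{n−j}) P_k(\underline x). -/
noncomputable def Mnk (e : Fin m → A) (k : ℕ) (P : EuclideanSpace ℝ (Fin m) → A)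
    (n : ℕ) (p : ℝ × EuclideanSpace ℝ (Fin m)) : A :=
  (∑ j ∈ Finset.range (n + 1),
    ((n.choose j : ℝ) * Ckn m k n j) • (p.1 ^ j • vec e p.2 ^ (n - j))) * P p.2

noncomputable def vecL (e : Fin m → A) : EuclideanSpace ℝ (Fin m) →L[ℝ] A :=
  ∑ j, (EuclideanSpace.proj j : EuclideanSpace ℝ (Fin m) →L[ℝ] ℝ).smulRight (e j)

lemma vecL_apply (e : Fin m → A) (y : EuclideanSpace ℝ (Fin m)) : vecL e y = vec e y := by
  simp [vecL, vec, ContinuousLinearMap.sum_apply]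

lemma hasFDerivAt_vec (e : Fin m → A) (x : EuclideanSpace ℝ (Fin m)) :
    HasFDerivAt (vec e) (vecL e) x := by
  have : vec e = fun y => vecL e y := funext fun y => (vecL_apply e y).symm
  rw [this]
  exact (vecL e).hasFDerivAt

lemma vec_single (e : Fin m → A) (j : Fin m) :
    vec e (EuclideanSpace.single j (1 : ℝ)) = e j := by
  simp [vec, EuclideanSpace.single_apply]

lemma vecL_single (e : Fin m → A) (j : Fin m) :
    vecL e (EuclideanSpace.single j (1 : ℝ)) = e j := by
  rw [vecL_apply, vec_single]

def qf (m : ℕ) (y : EuclideanSpace ℝ (Fin m)) : ℝ := -∑ i, y i ^ 2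

noncomputable def qd (m : ℕ) (x : EuclideanSpace ℝ (Fin m)) :
    EuclideanSpace ℝ (Fin m) →L[ℝ] ℝ :=
  -∑ i, (2 * x i) • (EuclideanSpace.proj i : EuclideanSpace ℝ (Fin m) →L[ℝ] ℝ)

lemma hasFDerivAt_qf (x : EuclideanSpace ℝ (Fin m)) : HasFDerivAt (qf m) (qd m x) x := by
  have h : ∀ i : Fin m, HasFDerivAt (fun y : EuclideanSpace ℝ (Fin m) => y i ^ 2)
      ((2 * x i) • (EuclideanSpace.proj i : EuclideanSpace ℝ (Fin m) →L[ℝ] ℝ)) x := by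
    intro i
    have hp := (EuclideanSpace.proj (𝕜 := ℝ) (ι := Fin m) i).hasFDerivAt (x := x)
    have := (hasDerivAt_pow 2 (x i)).comp_hasFDerivAt x hp
    rw [show (2 * x i) = ((2:ℕ):ℝ) * x i ^ (2-1) by simp]
    exact this
  have hsum : HasFDerivAt (fun y : EuclideanSpace ℝ (Fin m) => ∑ i, y i ^ 2)
      (∑ i, (2 * x i) • (EuclideanSpace.proj i : EuclideanSpace ℝ (Fin m) →L[ℝ] ℝ)) x :=
    HasFDerivAt.fun_sum fun i _ => h i
  exact hsum.neg

lemma qd_single (x : EuclideanSpace ℝ (Fin m)) (j : Fin m) :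
    qd m x (EuclideanSpace.single j (1 : ℝ)) = -(2 * x j) := by
  simp [qd, ContinuousLinearMap.sum_apply, EuclideanSpace.single_apply]


lemma vec_sq (e : Fin m → A) (he : ∀ j, e j * e j = -1)
    (hanti : ∀ j k, j ≠ k → e j * e k = -(e k * e j)) (y : EuclideanSpace ℝ (Fin m)) :
    vec e y * vec e y = (qf m y) • (1 : A) := by
  have hD : vec e y * vec e y = ∑ i, ∑ j, (y i * y j) • (e i * e j) := by
    rw [vec, Finset.sum_mul_sum]
    exact Finset.sum_congr rfl fun i _ => Finset.sum_congr rfl fun j _ =>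
      smul_mul_smul_comm (y i) (e i) (y j) (e j)
  have hswap : (∑ i, ∑ j, (y i * y j) • (e i * e j))
      = ∑ i, ∑ j, (y i * y j) • (e j * e i) := by
    rw [Finset.sum_comm]
    exact Finset.sum_congr rfl fun i _ => Finset.sum_congr rfl fun j _ => by
      rw [mul_comm (y j) (y i)]
  have h2 : vec e y * vec e y + vec e y * vec e y
      = ∑ i, ∑ j, (y i * y j) • (e i * e j + e j * e i) := by
    rw [hD]; nth_rewrite 2 [hswap]
    rw [← Finset.sum_add_distrib]
    exact Finset.sum_congr rfl fun i _ => by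
      rw [← Finset.sum_add_distrib]
      exact Finset.sum_congr rfl fun j _ => (smul_add _ _ _).symm
  have hij : ∀ i j : Fin m, e i * e j + e j * e i = if i = j then (-2 : A) else 0 := by
    intro i j
    by_cases h : i = j
    · subst h; rw [he i, ← neg_add, one_add_one_eq_two]; simp
    · simp only [h, if_false]
      rw [hanti i j h]; abel
  have h3 : vec e y * vec e y + vec e y * vec e y = (∑ i, y i ^ 2) • (-2 : A) := by
    rw [h2]
    have : ∀ i : Fin m, (∑ j, (y i * y j) • (e i * e j + e j * e i)) = (y i ^ 2) • (-2 : A) := by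
      intro i
      rw [Finset.sum_congr rfl fun j _ => by rw [hij i j]]
      simp [Finset.sum_ite_eq, sq]
    rw [Finset.sum_congr rfl fun i _ => this i, ← Finset.sum_smul]
  have h4 : (2 : ℝ) • (vec e y * vec e y) = (2 : ℝ) • ((qf m y) • (1 : A)) := by
    rw [two_smul]
    rw [h3, qf]
    have : (-2 : A) = (-2 : ℝ) • (1 : A) := by
      rw [neg_smul, two_smul, one_add_one_eq_two]
    rw [this, smul_smul, smul_smul]
    congr 1
    ring
  have := smul_right_injective A (by norm_num : (2:ℝ) ≠ 0)
  exact this h4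

lemma ejv (e : Fin m → A) (he : ∀ j, e j * e j = -1)
    (hanti : ∀ j k, j ≠ k → e j * e k = -(e k * e j)) (y : EuclideanSpace ℝ (Fin m)) (j : Fin m) :
    e j * vec e y = -(vec e y * e j) - (2 * y j) • (1 : A) := by
  have hij : ∀ i : Fin m, e j * e i + e i * e j = if i = j then (-2 : A) else 0 := by
    intro i
    by_cases h : i = j
    · subst h; rw [he i, ← neg_add, one_add_one_eq_two]; simp
    · simp only [h, if_false]
      rw [hanti j i (fun hh => h hh.symm)]
      abel
  have hsum : e j * vec e y + vec e y * e j = y j • (-2 : A) := by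
    rw [vec, Finset.mul_sum, Finset.sum_mul, ← Finset.sum_add_distrib]
    have : ∀ i : Fin m, e j * (y i • e i) + (y i • e i) * e j
        = y i • (if i = j then (-2 : A) else 0) := by
      intro i
      rw [mul_smul_comm, smul_mul_assoc, ← smul_add, hij i]
    rw [Finset.sum_congr rfl fun i _ => this i]
    simp
  have hcast : (-2 : ℝ) • (1 : A) = (-2 : A) := by
    rw [neg_smul, two_smul, one_add_one_eq_two]
  have : e j * vec e y = y j • (-2 : A) - vec e y * e j := by
    rw [← hsum]; abel
  rw [this, ← hcast, smul_smul]
  have : y j * (-2 : ℝ) = -(2 * y j) := by ring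
  rw [this, neg_smul]
  abel

lemma vecpow_even (e : Fin m → A) (he : ∀ j, e j * e j = -1)
    (hanti : ∀ j k, j ≠ k → e j * e k = -(e k * e j)) (y : EuclideanSpace ℝ (Fin m)) :
    ∀ l : ℕ, vec e y ^ (2 * l) = (qf m y) ^ l • (1 : A) := by
  intro l
  induction l with
  | zero => simp
  | succ l ih =>
    have : 2 * (l + 1) = 2 * l + 1 + 1 := by ring
    rw [this, pow_succ, pow_succ, mul_assoc, vec_sq e he hanti, ih]
    rw [smul_mul_assoc, one_mul, smul_smul, pow_succ]

lemma vecpow_odd (e : Fin m → A) (he : ∀ j, e j * e j = -1)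
    (hanti : ∀ j k, j ≠ k → e j * e k = -(e k * e j)) (y : EuclideanSpace ℝ (Fin m)) (l : ℕ) :
    vec e y ^ (2 * l + 1) = (qf m y) ^ l • vec e y := by
  rw [pow_succ, vecpow_even e he hanti y l, smul_mul_assoc, one_mul]


lemma basis_decomp (x : EuclideanSpace ℝ (Fin m)) :
    (∑ j, x j • EuclideanSpace.single j (1 : ℝ)) = x := by
  ext i
  simp [EuclideanSpace.single_apply, Pi.single_apply]

lemma polydiff {k : ℕ} {P : EuclideanSpace ℝ (Fin m) → A} (hPpoly : IsPolyDeg k P) :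
    Differentiable ℝ P := by
  obtain ⟨S, c, -, hrep⟩ := hPpoly
  have hPe : P = fun x => ∑ α ∈ S, (∏ j, x j ^ α j) • c α := funext hrep
  rw [hPe]
  apply Differentiable.fun_sum
  intro α _
  apply Differentiable.smul_const
  have hfac : ∀ j : Fin m, Differentiable ℝ (fun y : EuclideanSpace ℝ (Fin m) => y j ^ α j) := by
    intro j
    have : Differentiable ℝ (fun y : EuclideanSpace ℝ (Fin m) => y j) :=
      (EuclideanSpace.proj (𝕜 := ℝ) (ι := Fin m) j).differentiable
    exact this.pow _
  have : ∀ (s : Finset (Fin m)),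
      Differentiable ℝ (fun y : EuclideanSpace ℝ (Fin m) => ∏ j ∈ s, y j ^ α j) := by
    intro s
    induction s using Finset.induction_on with
    | empty => simpa using differentiable_const (1 : ℝ)
    | @insert a s ha ih =>
      have : (fun y : EuclideanSpace ℝ (Fin m) => ∏ j ∈ insert a s, y j ^ α j)
          = fun y => (y a ^ α a) * ∏ j ∈ s, y j ^ α j := by
        funext y; rw [Finset.prod_insert ha]
      rw [this]
      exact (hfac a).mul ih
  exact this Finset.univ

lemma euler {k : ℕ} {P : EuclideanSpace ℝ (Fin m) → A} (hP : Differentiable ℝ P)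
    (hhom : ∀ (t : ℝ) (x : EuclideanSpace ℝ (Fin m)), P (t • x) = t ^ k • P x)
    (x : EuclideanSpace ℝ (Fin m)) :
    ∑ j, x j • (fderiv ℝ P x (EuclideanSpace.single j (1 : ℝ))) = (k : ℝ) • P x := by
  have hline : HasDerivAt (fun t : ℝ => t • x) x 1 := by
    simpa using (hasDerivAt_id (1 : ℝ)).smul_const x
  have hPd : HasFDerivAt P (fderiv ℝ P x) ((1 : ℝ) • x) := by
    rw [one_smul]; exact (hP x).hasFDerivAt
  have h2 : HasDerivAt (fun t : ℝ => P (t • x)) (fderiv ℝ P x x) 1 := by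
    have := (hPd.comp_hasDerivAt (1 : ℝ) hline)
    exact this
  have h3 : HasDerivAt (fun t : ℝ => t ^ k • P x) ((k : ℝ) • P x) 1 := by
    have := (hasDerivAt_pow k (1 : ℝ)).smul_const (P x)
    simpa using this
  have hfe : (fun t : ℝ => P (t • x)) = fun t : ℝ => t ^ k • P x :=
    funext fun t => hhom t x
  rw [hfe] at h2
  have hkey : fderiv ℝ P x x = (k : ℝ) • P x := h2.unique h3
  calc ∑ j, x j • (fderiv ℝ P x (EuclideanSpace.single j (1 : ℝ)))
      = fderiv ℝ P x (∑ j, x j • EuclideanSpace.single j (1 : ℝ)) := by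
        rw [map_sum]
        exact Finset.sum_congr rfl fun j _ => ((fderiv ℝ P x).map_smul _ _).symm
    _ = (k : ℝ) • P x := by rw [basis_decomp]; exact hkey


lemma sum_smul_mul (e : Fin m → A) (x : EuclideanSpace ℝ (Fin m)) (Z : A) :
    (∑ j, x j • (e j * Z)) = vec e x * Z := by
  rw [vec, Finset.sum_mul]
  exact Finset.sum_congr rfl fun j _ => (smul_mul_assoc _ _ _).symm

lemma dirac_step (e : Fin m → A)
    (he : ∀ j, e j * e j = -1)
    (hanti : ∀ j k, j ≠ k → e j * e k = -(e k * e j))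
    {k : ℕ} {P : EuclideanSpace ℝ (Fin m) → A} (hP : Differentiable ℝ P)
    (hkey : ∀ x, ∑ j, x j • (fderiv ℝ P x (EuclideanSpace.single j (1:ℝ))) = (k : ℝ) • P x)
    (hmono : ∀ x, Dirac e P x = 0) (s : ℕ) (x : EuclideanSpace ℝ (Fin m)) :
    Dirac e (fun y => vec e y ^ (s + 1) * P y) x
      = (-betak m k (s + 1)) • (vec e x ^ s * P x) := by
  rcases Nat.even_or_odd (s + 1) with ⟨l, hl⟩ | ⟨l, hl⟩
  · -- even case : s + 1 = 2 * l, l ≥ 1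
    have hl2 : s + 1 = 2 * l := by omega
    have hl1 : 1 ≤ l := by omega
    have hbeta : betak m k (s + 1) = (2 * l : ℝ) := by
      rw [betak, if_neg (by omega), if_pos (by rw [hl2]; exact even_two_mul l)]
      rw [hl2]; push_cast; ring
    have hfe : (fun y => vec e y ^ (s + 1) * P y) = fun y => (qf m y) ^ l • P y := by
      funext y; rw [hl2, vecpow_even e he hanti y l, smul_mul_assoc, one_mul]
    have hql : HasFDerivAt (fun y : EuclideanSpace ℝ (Fin m) => (qf m y) ^ l)
        ((l * (qf m x) ^ (l - 1)) • qd m x) x := by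
      have := (hasDerivAt_pow l (qf m x)).comp_hasFDerivAt x (hasFDerivAt_qf x)
      exact this
    have hF : HasFDerivAt (fun y => (qf m y) ^ l • P y)
        ((qf m x ^ l) • (fderiv ℝ P x)
          + ((l * (qf m x) ^ (l - 1)) • qd m x).smulRight (P x)) x :=
      hql.smul (hP x).hasFDerivAt
    rw [Dirac, hfe, hF.fderiv]
    have hterm : ∀ j : Fin m,
        e j * (((qf m x ^ l) • (fderiv ℝ P x)
          + ((l * (qf m x) ^ (l - 1)) • qd m x).smulRight (P x)) (EuclideanSpace.single j 1))
        = (qf m x ^ l) • (e j * fderiv ℝ P x (EuclideanSpace.single j 1))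
          + ((-(2 * l) * (qf m x) ^ (l - 1))) • (x j • (e j * P x)) := by
      intro j
      rw [ContinuousLinearMap.add_apply, ContinuousLinearMap.smulRight_apply,
        ContinuousLinearMap.coe_smul', Pi.smul_apply, ContinuousLinearMap.smul_apply,
        qd_single, mul_add, mul_smul_comm, mul_smul_comm, smul_eq_mul]
      module
    rw [Finset.sum_congr rfl fun j _ => hterm j, Finset.sum_add_distrib,
      ← Finset.smul_sum, ← Finset.smul_sum]
    have h1 : (∑ j, e j * fderiv ℝ P x (EuclideanSpace.single j 1)) = 0 := hmono x
    rw [h1, smul_zero, zero_add]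
    have h2 : (∑ j, x j • (e j * P x)) = vec e x * P x := by
      rw [vec, Finset.sum_mul]
      exact Finset.sum_congr rfl fun j _ => (smul_mul_assoc _ _ _).symm
    rw [h2]
    have hs : s = 2 * (l - 1) + 1 := by omega
    rw [hbeta, hs, vecpow_odd e he hanti x (l - 1), smul_mul_assoc]
    module
  · -- odd case : s + 1 = 2 * l + 1
    have hl2 : s + 1 = 2 * l + 1 := hl
    have hs : s = 2 * l := by omega
    have hodd : ¬ Even (s + 1) := by
      rw [Nat.even_iff]; omega
    have hbeta : betak m k (s + 1) = 2 * (k : ℝ) + m + 2 * l := by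
      rw [betak, if_neg (by omega), if_neg hodd, hl2]
      push_cast; ring
    have hfe : (fun y => vec e y ^ (s + 1) * P y)
        = fun y => (qf m y) ^ l • (vec e y * P y) := by
      funext y; rw [hl2, vecpow_odd e he hanti y l, smul_mul_assoc]
    have hql : HasFDerivAt (fun y : EuclideanSpace ℝ (Fin m) => (qf m y) ^ l)
        ((l * (qf m x) ^ (l - 1)) • qd m x) x := by
      have := (hasDerivAt_pow l (qf m x)).comp_hasFDerivAt x (hasFDerivAt_qf x)
      exact this
    have hvp : HasFDerivAt (fun y => vec e y * P y)
        (vec e x • fderiv ℝ P x + (vecL e).smulRight (P x)) x :=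
      (hasFDerivAt_vec e x).mul' (hP x).hasFDerivAt
    have hF : HasFDerivAt (fun y => (qf m y) ^ l • (vec e y * P y))
        ((qf m x ^ l) • (vec e x • fderiv ℝ P x + (vecL e).smulRight (P x))
          + ((l * (qf m x) ^ (l - 1)) • qd m x).smulRight (vec e x * P x)) x :=
      hql.smul hvp
    rw [Dirac, hfe, hF.fderiv]
    have hterm : ∀ j : Fin m,
        e j * (((qf m x ^ l) • (vec e x • fderiv ℝ P x + (vecL e).smulRight (P x))
          + ((l * (qf m x) ^ (l - 1)) • qd m x).smulRight (vec e x * P x))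
            (EuclideanSpace.single j 1))
        = (qf m x ^ l) • (e j * (vec e x * fderiv ℝ P x (EuclideanSpace.single j 1)))
          + ((qf m x ^ l) • (e j * (e j * P x))
          + (-(2 * l) * (qf m x) ^ (l - 1)) • (x j • (e j * (vec e x * P x)))) := by
      intro j
      simp only [ContinuousLinearMap.add_apply, ContinuousLinearMap.smul_apply,
        ContinuousLinearMap.smulRight_apply, ContinuousLinearMap.coe_smul', Pi.smul_apply]
      rw [qd_single, vecL_single]
      simp only [smul_eq_mul, mul_add, mul_smul_comm]
      module
    rw [Finset.sum_congr rfl fun j _ => hterm j, Finset.sum_add_distrib,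
      Finset.sum_add_distrib, ← Finset.smul_sum, ← Finset.smul_sum, ← Finset.smul_sum]
    have hS1 : (∑ j, e j * (vec e x * fderiv ℝ P x (EuclideanSpace.single j 1)))
        = (-(2 * (k : ℝ))) • P x := by
      have hterm1 : ∀ j : Fin m,
          e j * (vec e x * fderiv ℝ P x (EuclideanSpace.single j 1))
          = -(vec e x * (e j * fderiv ℝ P x (EuclideanSpace.single j 1)))
            - (2 : ℝ) • (x j • fderiv ℝ P x (EuclideanSpace.single j 1)) := by
        intro j
        rw [← mul_assoc, ejv e he hanti x j, sub_mul, neg_mul, mul_assoc, smul_mul_assoc, one_mul,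
          mul_smul]
      rw [Finset.sum_congr rfl fun j _ => hterm1 j, Finset.sum_sub_distrib]
      have h0 : (∑ j, -(vec e x * (e j * fderiv ℝ P x (EuclideanSpace.single j 1)))) = 0 := by
        have h00 : (∑ j, e j * fderiv ℝ P x (EuclideanSpace.single j 1)) = 0 := hmono x
        rw [Finset.sum_neg_distrib, ← Finset.mul_sum, h00, mul_zero, neg_zero]
      rw [h0, ← Finset.smul_sum, hkey x, zero_sub, smul_smul, ← neg_smul]
    have hS2 : (∑ j : Fin m, e j * (e j * P x)) = (-(m : ℝ)) • P x := by
      have h1 : ∀ j : Fin m, e j * (e j * P x) = -(P x) := fun j => by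
        rw [← mul_assoc, he j, neg_one_mul]
      rw [Finset.sum_congr rfl fun j _ => h1 j, Finset.sum_const, Finset.card_univ,
        Fintype.card_fin, ← Nat.cast_smul_eq_nsmul ℝ, smul_neg, ← neg_smul]
    have hS3 : (∑ j, x j • (e j * (vec e x * P x))) = qf m x • P x := by
      rw [sum_smul_mul, ← mul_assoc, vec_sq e he hanti x, smul_mul_assoc, one_mul]
    rw [hS1, hS2, hS3, hbeta, hs, vecpow_even e he hanti x l, smul_mul_assoc, one_mul]
    have hscal : ∀ c : ℝ, (-(2 * (l : ℝ)) * qf m x ^ (l - 1)) * (qf m x * c)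
        = -(2 * (l : ℝ)) * qf m x ^ l * c := by
      intro c
      cases l with
      | zero => push_cast; ring
      | succ t => push_cast; simp only [Nat.add_sub_cancel, pow_succ]; ring
    rw [smul_smul, smul_smul, smul_smul, smul_smul]
    rw [← add_smul, ← add_smul]
    congr 1
    have := hscal 1
    cases l with
    | zero => push_cast; ring
    | succ t => push_cast; simp only [Nat.add_sub_cancel, pow_succ]; ring



lemma gdiff (e : Fin m → A) {P : EuclideanSpace ℝ (Fin m) → A} (hP : Differentiable ℝ P)
    (s : ℕ) : Differentiable ℝ (fun y => vec e y ^ s * P y) := by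
  have hv : Differentiable ℝ (vec e) := fun x => (hasFDerivAt_vec e x).differentiableAt
  exact (hv.pow s).mul hP

lemma dirac_const_smul (e : Fin m → A) {f : EuclideanSpace ℝ (Fin m) → A}
    (hf : Differentiable ℝ f) (c : ℝ) (x : EuclideanSpace ℝ (Fin m)) :
    Dirac e (fun y => c • f y) x = c • Dirac e f x := by
  rw [Dirac, Dirac]
  have hd : fderiv ℝ (fun y => c • f y) x = c • fderiv ℝ f x := fderiv_const_smul (hf x) c
  rw [hd, Finset.smul_sum]
  exact Finset.sum_congr rfl fun j _ => by
    rw [ContinuousLinearMap.coe_smul', Pi.smul_apply, mul_smul_comm]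

lemma dirac_iter (e : Fin m → A)
    (he : ∀ j, e j * e j = -1)
    (hanti : ∀ j k, j ≠ k → e j * e k = -(e k * e j))
    {k : ℕ} {P : EuclideanSpace ℝ (Fin m) → A} (hP : Differentiable ℝ P)
    (hkey : ∀ x, ∑ j, x j • (fderiv ℝ P x (EuclideanSpace.single j (1:ℝ))) = (k : ℝ) • P x)
    (hmono : ∀ x, Dirac e P x = 0) (n : ℕ) :
    ∀ j, j ≤ n → (Dirac e)^[j] (fun y => vec e y ^ n * P y)
      = fun x => (∏ i ∈ Finset.range j, (-betak m k (n - i))) • (vec e x ^ (n - j) * P x) := by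
  intro j
  induction j with
  | zero => intro _; funext x; simp
  | succ i ih =>
    intro hij
    have hi : i ≤ n := by omega
    rw [Function.iterate_succ_apply', ih hi]
    funext x
    rw [dirac_const_smul e (gdiff e hP (n - i)) _ x]
    have h2 : n - i = (n - (i + 1)) + 1 := by omega
    have h3 : Dirac e (fun y => vec e y ^ (n - i) * P y) x
        = (-betak m k (n - i)) • (vec e x ^ (n - (i + 1)) * P x) := by
      have := dirac_step e he hanti hP hkey hmono (n - (i + 1)) x
      rw [← h2] at this
      exact this
    rw [h3, smul_smul, Finset.prod_range_succ]

lemma dirac_iter_zero (e : Fin m → A)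
    (he : ∀ j, e j * e j = -1)
    (hanti : ∀ j k, j ≠ k → e j * e k = -(e k * e j))
    {k : ℕ} {P : EuclideanSpace ℝ (Fin m) → A} (hP : Differentiable ℝ P)
    (hkey : ∀ x, ∑ j, x j • (fderiv ℝ P x (EuclideanSpace.single j (1:ℝ))) = (k : ℝ) • P x)
    (hmono : ∀ x, Dirac e P x = 0) (n : ℕ) :
    ∀ j, n < j → (Dirac e)^[j] (fun y => vec e y ^ n * P y) = fun _ => 0 := by
  intro j
  induction j with
  | zero => omega
  | succ i ih =>
    intro hij
    rcases Nat.lt_or_ge n i with h | h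
    · rw [Function.iterate_succ_apply', ih h]
      funext x
      simp [Dirac]
    · have hni : n = i := by omega
      subst hni
      rw [Function.iterate_succ_apply',
        dirac_iter e he hanti hP hkey hmono n n le_rfl]
      funext x
      have h0 : (fun y => (∏ i ∈ Finset.range n, (-betak m k (n - i))) • (vec e y ^ (n - n) * P y))
          = fun y => (∏ i ∈ Finset.range n, (-betak m k (n - i))) • P y := by
        funext y; rw [Nat.sub_self, pow_zero, one_mul]
      rw [h0, dirac_const_smul e hP _ x, hmono x, smul_zero]

lemma betak_pos {m k : ℕ} (hkm : 1 ≤ 2 * k + m) (s : ℕ) : 0 < betak m k s := by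
  rw [betak]
  split_ifs with h1 h2
  · norm_num
  · exact_mod_cast Nat.pos_of_ne_zero h1
  · have h3 : (1 : ℝ) ≤ 2 * k + m := by exact_mod_cast hkm
    have h4 : (1 : ℝ) ≤ s := by exact_mod_cast Nat.one_le_iff_ne_zero.mpr h1
    linarith

/-- M_n^k(x) = (n!/∏_{s=0}^{n}β_k(s)) · CK[\underline x^n P_k](x). -/
theorem stmt15 (e : Fin m → A)
    (he : ∀ j, e j * e j = -1)
    (hanti : ∀ j k, j ≠ k → e j * e k = -(e k * e j))
    (k : ℕ) (hkm : 1 ≤ 2 * k + m)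
    (P : EuclideanSpace ℝ (Fin m) → A)
    (hPpoly : IsPolyDeg k P)
    (hhom : ∀ (t : ℝ) (x : EuclideanSpace ℝ (Fin m)), P (t • x) = t ^ k • P x)
    (hmono : ∀ x, Dirac e P x = 0) :
    ∀ (n : ℕ) p,
      Mnk e k P n p =
        ((n.factorial : ℝ) / ∏ s ∈ Finset.range (n + 1), betak m k s) •
          CK e (fun y => vec e y ^ n * P y) p := by
  have hP : Differentiable ℝ P := polydiff hPpoly
  have hkey : ∀ x, ∑ j, x j • (fderiv ℝ P x (EuclideanSpace.single j (1:ℝ))) = (k : ℝ) • P x :=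
    euler hP hhom
  intro n p
  obtain ⟨x0, x⟩ := p
  rw [CK]
  have hzero : ∀ j ∉ Finset.range (n + 1),
      (((-x0) ^ j / j.factorial : ℝ)) • (Dirac e)^[j] (fun y => vec e y ^ n * P y) x = 0 := by
    intro j hj
    rw [Finset.mem_range, not_lt] at hj
    rw [dirac_iter_zero e he hanti hP hkey hmono n j (by omega)]
    simp
  rw [tsum_eq_sum hzero]
  have hterm : ∀ j ∈ Finset.range (n + 1),
      (((-x0) ^ j / j.factorial : ℝ)) • (Dirac e)^[j] (fun y => vec e y ^ n * P y) x
      = (((-x0) ^ j / j.factorial) * ∏ i ∈ Finset.range j, (-betak m k (n - i)))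
          • (vec e x ^ (n - j) * P x) := by
    intro j hj
    rw [Finset.mem_range] at hj
    rw [dirac_iter e he hanti hP hkey hmono n j (by omega), smul_smul]
  rw [Finset.sum_congr rfl hterm, Finset.smul_sum, Mnk, Finset.sum_mul]
  apply Finset.sum_congr rfl
  intro j hj
  rw [Finset.mem_range] at hj
  have hj' : j ≤ n := by omega
  rw [smul_mul_assoc, smul_mul_assoc, smul_smul, smul_smul]
  congr 1
  -- now a scalar identity in ℝ
  have hprodneg : ∏ i ∈ Finset.range j, (-betak m k (n - i))
      = (-1 : ℝ) ^ j * ∏ i ∈ Finset.range j, betak m k (n - i) := by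
    rw [Finset.prod_congr rfl fun i _ => (neg_eq_neg_one_mul (betak m k (n - i)) : _),
      Finset.prod_mul_distrib, Finset.prod_const, Finset.card_range]
  have hneg : (-x0) ^ j = (-1 : ℝ) ^ j * x0 ^ j := by
    rw [neg_pow]
  have hB : (∏ s ∈ Finset.range (n + 1), betak m k s)
      = (∏ s ∈ Finset.range (n - j + 1), betak m k s) * ∏ i ∈ Finset.range j, betak m k (n - i) := by
    have h1 : n + 1 = (n - j + 1) + j := by omega
    rw [h1, Finset.prod_range_add]
    congr 1
    rw [← Finset.prod_range_reflect (fun i => betak m k (n - i)) j]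
    apply Finset.prod_congr rfl
    intro i hi
    rw [Finset.mem_range] at hi
    congr 1
    omega
  have hBnj : (∏ s ∈ Finset.range (n - j + 1), betak m k s) ≠ 0 :=
    ne_of_gt (Finset.prod_pos fun s _ => betak_pos hkm s)
  have hPj : (∏ i ∈ Finset.range j, betak m k (n - i)) ≠ 0 :=
    ne_of_gt (Finset.prod_pos fun i _ => betak_pos hkm (n - i))
  have hone : ((-1 : ℝ)) ^ j * (-1 : ℝ) ^ j = 1 := by
    rw [← pow_add]
    exact Even.neg_one_pow ⟨j, rfl⟩
  have hfact : ((n.choose j : ℝ)) * (j.factorial : ℝ) * ((n - j).factorial : ℝ)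
      = (n.factorial : ℝ) := by
    exact_mod_cast congrArg (Nat.cast : ℕ → ℝ) (Nat.choose_mul_factorial_mul_factorial hj')
  have hjf : (j.factorial : ℝ) ≠ 0 := Nat.cast_ne_zero.mpr (Nat.factorial_ne_zero j)
  rw [Ckn, hB, hprodneg, hneg]
  field_simp
  ring_nf
  have h2 : ((-1 : ℝ)) ^ (j * 2) = 1 := Even.neg_one_pow ⟨j, by omega⟩
  rw [h2, mul_one]
  linear_combination x0 ^ j * hfact
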